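/- Let K be a field, n ≥ 2, and fix indices k ≠ l in {1,…,n}. Let B and B′ be symmetric n×n matrices over K such that B_{ll} ≠ 0 and: (i) B_{ij} = B′_{ij} for all i, j ≠ k; (ii) B_{ik}·B_{jl} − B_{jk}·B_{il} = B′_{ik}·B′_{jl} − B′_{jk}·B′_{il} for all i, j ≠ k; and (iii) B_{kk}·B_{ll} − B_{kl}·B_{lk} = B′_{kk}·B′_{ll} − B′_{kl}·B′_{lk}. Then there exists t ∈ K such that B′ = (I + t·E_{kl})·B·(I + t·E_{kl})ᵀ. -/

import Mathlib

open Matrix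

theorem stdBasis_transpose_aux {K : Type*} [Field K] {n : ℕ} (k l : Fin n) (t : K) :
    (Matrix.single k l t)ᵀ = Matrix.single l k t := by
  ext a b
  simp only [Matrix.transpose_apply, Matrix.single, Matrix.of_apply]
  by_cases h1 : k = b <;> by_cases h2 : l = a <;> simp [h1, h2, and_comm]

/-- Separation content of Lemma 4.6: the functions `B ↦ B_{ij}` (`i, j ≠ k`), the minors
`B_{ik}B_{jl} − B_{jk}B_{il}` (`i, j ≠ k`) and the minor `B_{kk}B_{ll} − B_{kl}B_{lk}`
separate the orbits of the congruence group `B ↦ (I + t·E_{kl})·B·(I + t·E_{kl})ᵀ`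
through symmetric matrices with `B_{ll} ≠ 0`. -/
theorem symmetric_congruence_orbit_separation
    {K : Type*} [Field K] {n : ℕ} (hn : 2 ≤ n)
    (k l : Fin n) (hkl : k ≠ l)
    (B B' : Matrix (Fin n) (Fin n) K)
    (hB : B.IsSymm) (hB' : B'.IsSymm)
    (hll : B l l ≠ 0)
    (heq : ∀ i j : Fin n, i ≠ k → j ≠ k → B i j = B' i j)
    (hminor : ∀ i j : Fin n, i ≠ k → j ≠ k →
      B i k * B j l - B j k * B i l = B' i k * B' j l - B' j k * B' i l)
    (hminor' : B k k * B l l - B k l * B l k = B' k k * B' l l - B' k l * B' l k) :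
    ∃ t : K, B' = (1 + t • Matrix.single k l (1 : K)) * B *
      (1 + t • Matrix.single k l (1 : K))ᵀ := by
  have hlk : l ≠ k := hkl.symm
  set t : K := (B' k l - B k l) / B l l with ht
  have htll : t * B l l = B' k l - B k l := div_mul_cancel₀ _ hll
  have hcol : ∀ i : Fin n, i ≠ k → B' i k = B i k + t * B i l := by
    intro i hi
    have h1 := hminor i l hi hlk
    have hll' : B' l l = B l l := (heq l l hlk hlk).symm
    have hil : B' i l = B i l := (heq i l hi hlk).symm
    rw [hll', hil, hB'.apply k l, hB.apply k l] at h1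
    have h2 : B' i k * B l l = (B i k + t * B i l) * B l l := by
      have h3 : (B' k l - B k l) * B i l = t * B l l * B i l := by rw [htll]
      linear_combination h3 - h1
    exact mul_right_cancel₀ hll h2
  have hBkl : B' k l = B k l + t * B l l := by rw [htll]; ring
  have hkk : B' k k = B k k + 2 * t * B k l + t ^ 2 * B l l := by
    have h1 := hminor'
    have hll' : B' l l = B l l := (heq l l hkl.symm hkl.symm).symm
    rw [hB'.apply k l, hB.apply k l, hBkl, hll'] at h1
    have h2 : B' k k * B l l = (B k k + 2 * t * B k l + t ^ 2 * B l l) * B l l := by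
      linear_combination -h1
    exact mul_right_cancel₀ hll h2
  refine ⟨t, ?_⟩
  have hsm : t • Matrix.single k l (1 : K) = Matrix.single k l t := by
    rw [Matrix.smul_single, smul_eq_mul, mul_one]
  rw [hsm, Matrix.transpose_add, Matrix.transpose_one, stdBasis_transpose_aux,
    Matrix.add_mul, Matrix.one_mul, Matrix.mul_add, Matrix.mul_one, Matrix.add_mul]
  ext i j
  simp only [Matrix.add_apply]
  rcases eq_or_ne i k with hik | hik <;> rcases eq_or_ne j k with hjk | hjk
  · rw [hik, hjk]
    rw [Matrix.single_mul_apply_same, Matrix.mul_single_apply_same,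
      Matrix.mul_single_apply_same, Matrix.single_mul_apply_same,
      hkk, hB.apply k l]
    ring
  · rw [hik]
    rw [Matrix.single_mul_apply_same,
      Matrix.mul_single_apply_of_ne _ _ _ _ _ hjk,
      Matrix.mul_single_apply_of_ne _ _ _ _ _ hjk,
      hB'.apply j k, hcol j hjk, hB.apply j k, hB.apply l j]
    ring
  · rw [hjk]
    rw [Matrix.single_mul_apply_of_ne _ _ _ _ _ hik,
      Matrix.mul_single_apply_same, Matrix.mul_single_apply_same,
      Matrix.single_mul_apply_of_ne _ _ _ _ _ hik,
      hcol i hik]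
    ring
  · rw [Matrix.single_mul_apply_of_ne _ _ _ _ _ hik,
      Matrix.mul_single_apply_of_ne _ _ _ _ _ hjk,
      Matrix.mul_single_apply_of_ne _ _ _ _ _ hjk,
      heq i j hik hjk]
    ring
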